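/- Let $\sigma:\mathbb{R}\to\mathbb{R}$ be a function and suppose that for some constant $V<\infty$, for every finite increasing sequence $x_0 < x_1 < \cdots < x_N$ one has $\sum_{k=1}^{N-1}\left|\frac{\sigma(x_{k+1})-\sigma(x_k)}{x_{k+1}-x_k}-\frac{\sigma(x_k)-\sigma(x_{k-1})}{x_k-x_{k-1}}\right| \le V$, and that $\sigma$ is Lipschitz. Then the right derivative of $\sigma$ exists at every point $x_0\in\mathbb{R}$, i.e. $\lim_{h\to 0^+}\frac{\sigma(x_0+h)-\sigma(x_0)}{h}$ exists and is finite. -/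

import Mathlib

open Filter

private lemma auxA (sa sb T a b : ℝ) (ha : 0 < a) (hab : a < b)
    (hT : T = (b * sb - a * sa) / (b - a)) : |sb - sa| ≤ |T - sa| := by
  have hba : (0:ℝ) < b - a := by linarith
  have hb : (0:ℝ) < b := lt_trans ha hab
  have h1 : T - sa = b * (sb - sa) / (b - a) := by
    rw [hT]; field_simp; ring
  rw [h1, abs_div, abs_of_pos hba, abs_mul, abs_of_pos hb, le_div_iff₀ hba]
  nlinarith [abs_nonneg (sb - sa)]

private lemma auxB (sa sb U a b Cr eps : ℝ) (hCr : 0 ≤ Cr) (heps : 0 < eps)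
    (hb : 0 < b) (hba : b ≤ (eps / (8 * (Cr + 1) + eps)) * a)
    (hsa : |sa| ≤ Cr) (hsb : |sb| ≤ Cr)
    (hU : U = (a * sa - b * sb) / (a - b)) : |U - sa| ≤ eps / 4 := by
  have hden : (0:ℝ) < 8 * (Cr + 1) + eps := by linarith
  have hθ0 : 0 < eps / (8 * (Cr + 1) + eps) := by positivity
  have hθ1 : eps / (8 * (Cr + 1) + eps) < 1 := by
    rw [div_lt_one hden]; linarith
  have ha : 0 < a := by
    by_contra h
    push_neg at h
    have := mul_nonpos_of_nonneg_of_nonpos hθ0.le h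
    linarith
  have hab2 : b < a := by
    have := mul_lt_mul_of_pos_right hθ1 ha
    rw [one_mul] at this
    linarith
  have hba2 : (0:ℝ) < a - b := by linarith
  have h1 : U - sa = b * (sa - sb) / (a - b) := by
    rw [hU]; field_simp; ring
  rw [h1, abs_div, abs_of_pos hba2, abs_mul, abs_of_pos hb, div_le_iff₀ hba2]
  have h2 : |sa - sb| ≤ 2 * Cr := by
    rw [abs_le] at hsa hsb ⊢
    constructor <;> linarith [hsa.1, hsa.2, hsb.1, hsb.2]
  have h3 : b * (8 * (Cr + 1) + eps) ≤ eps * a := by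
    rw [div_mul_eq_mul_div, le_div_iff₀ hden] at hba
    linarith
  nlinarith [mul_le_mul_of_nonneg_left h2 hb.le]

private lemma extendSum (σ : ℝ → ℝ) (V : ℝ)
    (hBV : ∀ (N : ℕ) (x : ℕ → ℝ), StrictMono x →
      ∑ k ∈ Finset.range N,
        |(σ (x (k + 2)) - σ (x (k + 1))) / (x (k + 2) - x (k + 1))
          - (σ (x (k + 1)) - σ (x k)) / (x (k + 1) - x k)| ≤ V)
    (N : ℕ) (y : ℕ → ℝ) (hy : ∀ i, i ≤ N → y i < y (i + 1)) :
    ∑ k ∈ Finset.range N,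
        |(σ (y (k + 2)) - σ (y (k + 1))) / (y (k + 2) - y (k + 1))
          - (σ (y (k + 1)) - σ (y k)) / (y (k + 1) - y k)| ≤ V := by
  classical
  set x : ℕ → ℝ := fun j => if j ≤ N + 1 then y j else y (N + 1) + ((j - (N + 1) : ℕ) : ℝ)
    with hxdef
  have hxeq : ∀ j, j ≤ N + 1 → x j = y j := by
    intro j hj; simp only [hxdef, if_pos hj]
  have hx : StrictMono x := by
    apply strictMono_nat_of_lt_succ
    intro j
    by_cases h1 : j + 1 ≤ N + 1
    · rw [hxeq j (by omega), hxeq (j + 1) h1]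
      exact hy j (by omega)
    · by_cases h0 : j ≤ N + 1
      · have hj : j = N + 1 := by omega
        subst hj
        rw [hxeq (N + 1) le_rfl]
        simp only [hxdef, if_neg h1]
        have h2 : (N + 1 + 1 - (N + 1) : ℕ) = 1 := by omega
        rw [h2]
        norm_num
      · simp only [hxdef, if_neg h0, if_neg h1]
        have h2 : (j + 1 - (N + 1) : ℕ) = (j - (N + 1) : ℕ) + 1 := by omega
        rw [h2]
        push_cast
        linarith
  have hV := hBV N x hx
  calc ∑ k ∈ Finset.range N,
        |(σ (y (k + 2)) - σ (y (k + 1))) / (y (k + 2) - y (k + 1))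
          - (σ (y (k + 1)) - σ (y k)) / (y (k + 1) - y k)|
      = ∑ k ∈ Finset.range N,
        |(σ (x (k + 2)) - σ (x (k + 1))) / (x (k + 2) - x (k + 1))
          - (σ (x (k + 1)) - σ (x k)) / (x (k + 1) - x k)| := by
        apply Finset.sum_congr rfl
        intro k hk
        have hk' : k < N := Finset.mem_range.mp hk
        rw [hxeq k (by omega), hxeq (k + 1) (by omega), hxeq (k + 2) (by omega)]
    _ ≤ V := hV

theorem stmt5 (σ : ℝ → ℝ) (V : ℝ)
    (hBV : ∀ (N : ℕ) (x : ℕ → ℝ), StrictMono x →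
      ∑ k ∈ Finset.range N,
        |(σ (x (k + 2)) - σ (x (k + 1))) / (x (k + 2) - x (k + 1))
          - (σ (x (k + 1)) - σ (x k)) / (x (k + 1) - x k)| ≤ V)
    (C : NNReal) (hLip : LipschitzWith C σ) :
    ∀ x₀ : ℝ, ∃ L : ℝ,
      Tendsto (fun h : ℝ => (σ (x₀ + h) - σ x₀) / h)
        (nhdsWithin 0 (Set.Ioi 0)) (nhds L) := by
  intro x₀
  set s : ℝ → ℝ := fun h => (σ (x₀ + h) - σ x₀) / h with hsdef
  suffices hC : ∀ ε : ℝ, 0 < ε → ∃ δ : ℝ, 0 < δ ∧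
      ∀ a ∈ Set.Ioo (0:ℝ) δ, ∀ b ∈ Set.Ioo (0:ℝ) δ, |s a - s b| ≤ ε by
    have hcauchy : Cauchy (map s (nhdsWithin (0:ℝ) (Set.Ioi 0))) := by
      rw [Metric.cauchy_iff]
      constructor
      · exact map_neBot
      · intro ε hε
        obtain ⟨δ, hδ, hδ'⟩ := hC (ε / 2) (by linarith)
        refine ⟨s '' Set.Ioo 0 δ, ?_, ?_⟩
        · rw [mem_map]
          exact mem_of_superset (Ioo_mem_nhdsGT_of_mem (by constructor <;> simp [hδ]))
            (Set.subset_preimage_image s _)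
        · rintro u ⟨a, ha, rfl⟩ v ⟨b, hb, rfl⟩
          rw [Real.dist_eq]
          calc |s a - s b| ≤ ε / 2 := hδ' a ha b hb
            _ < ε := by linarith
    obtain ⟨L, hL⟩ := CompleteSpace.complete hcauchy
    exact ⟨L, hL⟩
  intro ε hε
  by_contra hcon
  push_neg at hcon
  have hsbd : ∀ h : ℝ, 0 < h → |s h| ≤ (C : ℝ) := by
    intro h hh
    have h1 := hLip.dist_le_mul (x₀ + h) x₀
    rw [Real.dist_eq, Real.dist_eq] at h1
    have h2 : x₀ + h - x₀ = h := by ring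
    rw [h2, abs_of_pos hh] at h1
    rw [hsdef]
    simp only
    rw [abs_div, abs_of_pos hh, div_le_iff₀ hh]
    exact h1
  have hmul : ∀ h : ℝ, 0 < h → σ (x₀ + h) - σ x₀ = h * s h := by
    intro h hh
    rw [hsdef]
    field_simp
  have H : ∀ δ : ℝ, 0 < δ →
      ∃ p : ℝ × ℝ, 0 < p.1 ∧ p.1 < p.2 ∧ p.2 < δ ∧ ε ≤ |s p.1 - s p.2| := by
    intro δ hδ
    obtain ⟨a, ha, b, hb, hab⟩ := hcon δ hδ
    rcases lt_trichotomy a b with h | h | h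
    · exact ⟨(a, b), ha.1, h, hb.2, hab.le⟩
    · subst h; simp at hab; linarith
    · exact ⟨(b, a), hb.1, h, ha.2, by rw [abs_sub_comm]; exact hab.le⟩
  choose g hg using H
  set θ : ℝ := ε / (8 * ((C : ℝ) + 1) + ε) with hθdef
  have hden : (0:ℝ) < 8 * ((C : ℝ) + 1) + ε := by positivity
  have hθ0 : 0 < θ := by rw [hθdef]; positivity
  have hθ1 : θ < 1 := by
    rw [hθdef, div_lt_one hden]
    nlinarith [C.coe_nonneg]
  let R : ℕ → {d : ℝ // 0 < d} := fun n =>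
    Nat.rec ⟨1, one_pos⟩ (fun _ p => ⟨θ * (g p.1 p.2).1, mul_pos hθ0 (hg p.1 p.2).1⟩) n
  let a : ℕ → ℝ := fun k => (g (R k).1 (R k).2).1
  let b : ℕ → ℝ := fun k => (g (R k).1 (R k).2).2
  have hgk : ∀ k, 0 < a k ∧ a k < b k ∧ b k < (R k).1 ∧ ε ≤ |s (a k) - s (b k)| :=
    fun k => hg (R k).1 (R k).2
  have hRsucc : ∀ k, (R (k + 1)).1 = θ * a k := fun k => rfl
  have hbsucc : ∀ k, b (k + 1) < θ * a k := fun k => by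
    rw [← hRsucc k]; exact (hg (R (k+1)).1 (R (k+1)).2).2.2.1
  obtain ⟨K, hK⟩ := exists_nat_gt (V / (3 * ε / 4))
  have hKV : V < (K : ℝ) * (3 * ε / 4) := by
    rw [div_lt_iff₀ (by linarith : (0:ℝ) < 3 * ε / 4)] at hK
    linarith
  classical
  set c : ℕ → ℝ := fun j => if Even j then a (K - j / 2) else b (K - j / 2) with hcdef
  have hcE : ∀ i : ℕ, c (2 * i) = a (K - i) := by
    intro i
    simp only [hcdef]
    rw [if_pos (even_two_mul i)]
    congr 1
    omega
  have hcO : ∀ i : ℕ, c (2 * i + 1) = b (K - i) := by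
    intro i
    simp only [hcdef]
    rw [if_neg (by simp [Nat.even_add_one, parity_simps] : ¬ Even (2 * i + 1))]
    congr 1
    omega
  set y : ℕ → ℝ := fun j => x₀ + c j with hydef
  have hsucc : ∀ i, i ≤ 2 * K → y i < y (i + 1) := by
    intro j hj
    rcases Nat.even_or_odd j with hje | hjo
    · obtain ⟨i, hi⟩ := hje
      have hj2 : j = 2 * i := by omega
      subst hj2
      simp only [hydef]
      rw [hcE i, hcO i]
      have := (hgk (K - i)).2.1
      linarith
    · obtain ⟨i, hi⟩ := hjo
      subst hi
      have hiK : i < K := by omega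
      simp only [hydef]
      have e1 : (2 * i + 1) + 1 = 2 * (i + 1) := by ring
      rw [hcO i, e1, hcE (i + 1)]
      have e2 : K - i = (K - (i + 1)) + 1 := by omega
      rw [e2]
      have h1 := hbsucc (K - (i + 1))
      have h2 : θ * a (K - (i + 1)) < a (K - (i + 1)) := by
        nlinarith [(hgk (K - (i + 1))).1]
      linarith
  have hgood : ∀ i ∈ Finset.range K, 3 * ε / 4 ≤
      |(σ (y (2 * i + 1 + 2)) - σ (y (2 * i + 1 + 1))) / (y (2 * i + 1 + 2) - y (2 * i + 1 + 1))
        - (σ (y (2 * i + 1 + 1)) - σ (y (2 * i + 1))) / (y (2 * i + 1 + 1) - y (2 * i + 1))| := by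
    intro i hi
    have hiK : i < K := Finset.mem_range.mp hi
    obtain ⟨m, hm⟩ : ∃ m, m = K - (i + 1) := ⟨_, rfl⟩
    have e1 : y (2 * i + 1) = x₀ + b (m + 1) := by
      simp only [hydef]
      rw [hcO i]
      have h : K - i = m + 1 := by omega
      rw [h]
    have e2 : y (2 * i + 1 + 1) = x₀ + a m := by
      simp only [hydef]
      have h : 2 * i + 1 + 1 = 2 * (i + 1) := by ring
      rw [h, hcE (i + 1), ← hm]
    have e3 : y (2 * i + 1 + 2) = x₀ + b m := by
      simp only [hydef]
      have h : 2 * i + 1 + 2 = 2 * (i + 1) + 1 := by ring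
      rw [h, hcO (i + 1), ← hm]
    have ham : 0 < a m := (hgk m).1
    have habm : a m < b m := (hgk m).2.1
    have hbm : 0 < b m := lt_trans ham habm
    have hbm1 : 0 < b (m + 1) := lt_trans (hgk (m + 1)).1 (hgk (m + 1)).2.1
    have hbam : b (m + 1) < θ * a m := hbsucc m
    rw [e1, e2, e3]
    have hT : (σ (x₀ + b m) - σ (x₀ + a m)) / (x₀ + b m - (x₀ + a m))
        = (b m * s (b m) - a m * s (a m)) / (b m - a m) := by
      have n1 : σ (x₀ + b m) - σ (x₀ + a m)
          = (σ (x₀ + b m) - σ x₀) - (σ (x₀ + a m) - σ x₀) := by ring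
      rw [n1, hmul _ hbm, hmul _ ham]
      congr 1
      ring
    have hU : (σ (x₀ + a m) - σ (x₀ + b (m + 1))) / (x₀ + a m - (x₀ + b (m + 1)))
        = (a m * s (a m) - b (m + 1) * s (b (m + 1))) / (a m - b (m + 1)) := by
      have n1 : σ (x₀ + a m) - σ (x₀ + b (m + 1))
          = (σ (x₀ + a m) - σ x₀) - (σ (x₀ + b (m + 1)) - σ x₀) := by ring
      rw [n1, hmul _ ham, hmul _ hbm1]
      congr 1
      ring
    rw [hT, hU]
    have hA := auxA (s (a m)) (s (b m))
      ((b m * s (b m) - a m * s (a m)) / (b m - a m)) (a m) (b m) ham habm rfl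
    have hε1 : ε ≤ |s (b m) - s (a m)| := by
      rw [abs_sub_comm]; exact (hgk m).2.2.2
    have hbam' : b (m + 1) ≤ ε / (8 * ((C : ℝ) + 1) + ε) * a m := by
      rw [← hθdef]; exact hbam.le
    have hB := auxB (s (a m)) (s (b (m + 1)))
      ((a m * s (a m) - b (m + 1) * s (b (m + 1))) / (a m - b (m + 1)))
      (a m) (b (m + 1)) (C : ℝ) ε C.coe_nonneg hε hbm1 hbam'
      (hsbd _ ham) (hsbd _ hbm1) rfl
    have htri := abs_sub_le ((b m * s (b m) - a m * s (a m)) / (b m - a m))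
      ((a m * s (a m) - b (m + 1) * s (b (m + 1))) / (a m - b (m + 1))) (s (a m))
    linarith
  have hVsum := extendSum σ V hBV (2 * K) y hsucc
  have hfinal : (K : ℝ) * (3 * ε / 4) ≤ V := by
    calc (K : ℝ) * (3 * ε / 4)
        = ∑ _i ∈ Finset.range K, 3 * ε / 4 := by
          rw [Finset.sum_const, Finset.card_range, nsmul_eq_mul]
      _ ≤ ∑ i ∈ Finset.range K,
          |(σ (y (2 * i + 1 + 2)) - σ (y (2 * i + 1 + 1))) / (y (2 * i + 1 + 2) - y (2 * i + 1 + 1))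
            - (σ (y (2 * i + 1 + 1)) - σ (y (2 * i + 1))) / (y (2 * i + 1 + 1) - y (2 * i + 1))| :=
          Finset.sum_le_sum hgood
      _ = ∑ k ∈ (Finset.range K).image (fun i => 2 * i + 1),
          |(σ (y (k + 2)) - σ (y (k + 1))) / (y (k + 2) - y (k + 1))
            - (σ (y (k + 1)) - σ (y k)) / (y (k + 1) - y k)| := by
          rw [Finset.sum_image (by intro p _ q _ h; simp only at h; omega)]
      _ ≤ ∑ k ∈ Finset.range (2 * K),
          |(σ (y (k + 2)) - σ (y (k + 1))) / (y (k + 2) - y (k + 1))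
            - (σ (y (k + 1)) - σ (y k)) / (y (k + 1) - y k)| := by
          apply Finset.sum_le_sum_of_subset_of_nonneg
          · intro k hk
            simp only [Finset.mem_image, Finset.mem_range] at hk
            obtain ⟨i, hi, rfl⟩ := hk
            simp only [Finset.mem_range]
            omega
          · intro k _ _
            exact abs_nonneg _
      _ ≤ V := hVsum
  linarith
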